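/- Let g_1, …, g_i, r_1, …, r_i ∈ F_{q^m}, and let P, K, N, D be q-linearized polynomials over F_{q^m} satisfying P(g_j) = K(r_j) and N(g_j) = D(r_j) for all j = 1, …, i − 1. Set Δ = N(g_i) − D(r_i) and Γ = P(g_i) − K(r_i), and define P'(X) = P(X)^q − Γ^{q−1} P(X), K'(X) = K(X)^q − Γ^{q−1} K(X), N'(X) = Δ·P(X) − Γ·N(X), D'(X) = Δ·K(X) − Γ·D(X). Then P', K', N', D' are q-linearized and satisfy P'(g_j) = K'(r_j) and N'(g_j) = D'(r_j) for all j = 1, …, i. -/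

import Mathlib

open Polynomial

/-- `f` is a `q`-linearized polynomial: every monomial with nonzero coefficient
has exponent a power of `q`, i.e. `f = Σ aᵢ X^(q^i)`. -/
def IsqLinearized (q : ℕ) {L : Type*} [Field L] (f : L[X]) : Prop :=
  ∀ i : ℕ, f.coeff i ≠ 0 → ∃ j : ℕ, i = q ^ j

lemma isqLinearized_comb {L : Type*} [Field L] (q : ℕ) (a b : L) (f h : L[X])
    (hf : IsqLinearized q f) (hh : IsqLinearized q h) :
    IsqLinearized q (C a * f - C b * h) := by
  intro i hi
  rw [coeff_sub, coeff_C_mul, coeff_C_mul] at hi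
  rcases eq_or_ne (f.coeff i) 0 with h1 | h1
  · rcases eq_or_ne (h.coeff i) 0 with h2 | h2
    · simp [h1, h2] at hi
    · exact hh i h2
  · exact hf i h1

lemma isqLinearized_pow {L : Type*} [Field L] (p e : ℕ) [hp : Fact p.Prime] [CharP L p]
    (q : ℕ) (hqe : q = p ^ e) (he : 0 < e) (f : L[X]) (hf : IsqLinearized q f) :
    IsqLinearized q (f ^ q) := by
  intro i hi
  rw [hqe, ← Polynomial.map_iterateFrobenius_expand, coeff_map] at hi
  have h0 : (Polynomial.expand L (p ^ e) f).coeff i ≠ 0 := by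
    intro h; rw [h, map_zero] at hi; exact hi rfl
  rw [Polynomial.coeff_expand (pow_pos hp.out.pos e)] at h0
  by_cases hd : p ^ e ∣ i
  · rw [if_pos hd] at h0
    obtain ⟨c, hc⟩ := hd
    have hcq : f.coeff c ≠ 0 := by
      rwa [hc, Nat.mul_div_cancel_left _ (pow_pos hp.out.pos e)] at h0
    obtain ⟨j, hj⟩ := hf c hcq
    exact ⟨j + 1, by rw [hc, hj, hqe, pow_succ, mul_comm]⟩
  · rw [if_neg hd] at h0; exact absurd rfl h0

/-- The update step: given `q`-linearized `P, K, N, D` interpolating the first `i − 1`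
data points (here the points are indexed by `Fin (n + 1)` with `i = n + 1`), the updated
polynomials `P' = P^q − Γ^{q−1}P`, `K' = K^q − Γ^{q−1}K`, `N' = ΔP − ΓN`,
`D' = ΔK − ΓD` are `q`-linearized and interpolate all `i` data points. -/
theorem update_step_interpolates
    (q m : ℕ) (hq : IsPrimePow q) (hm : 0 < m)
    (F L : Type*) [Field F] [Field L] [Fintype F] [Fintype L] [Algebra F L]
    (hcardF : Fintype.card F = q) (hcardL : Fintype.card L = q ^ m)
    (n : ℕ) (g r : Fin (n + 1) → L)
    (P Kp N D : L[X])
    (hP : IsqLinearized q P) (hKp : IsqLinearized q Kp)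
    (hN : IsqLinearized q N) (hD : IsqLinearized q D)
    (hPK : ∀ j : Fin n, P.eval (g j.castSucc) = Kp.eval (r j.castSucc))
    (hND : ∀ j : Fin n, N.eval (g j.castSucc) = D.eval (r j.castSucc))
    (Δ Γ : L)
    (hΔ : Δ = N.eval (g (Fin.last n)) - D.eval (r (Fin.last n)))
    (hΓ : Γ = P.eval (g (Fin.last n)) - Kp.eval (r (Fin.last n)))
    (P' K' N' D' : L[X])
    (hP' : P' = P ^ q - C (Γ ^ (q - 1)) * P)
    (hK' : K' = Kp ^ q - C (Γ ^ (q - 1)) * Kp)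
    (hN' : N' = C Δ * P - C Γ * N)
    (hD' : D' = C Δ * Kp - C Γ * D) :
    (IsqLinearized q P' ∧ IsqLinearized q K' ∧ IsqLinearized q N' ∧ IsqLinearized q D') ∧
      ∀ j : Fin (n + 1), P'.eval (g j) = K'.eval (r j) ∧ N'.eval (g j) = D'.eval (r j) := by
  -- set up characteristic
  obtain ⟨p, e, hpp, he, hqe⟩ := hq
  have hpp' : p.Prime := hpp.nat_prime
  haveI : Fact p.Prime := ⟨hpp'⟩
  have hq1 : 1 ≤ q := by
    subst hqe; exact Nat.one_le_iff_ne_zero.mpr (pow_ne_zero _ hpp'.ne_zero)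
  -- CharP L p
  obtain ⟨p', hcp⟩ := CharP.exists L
  haveI := hcp
  obtain ⟨k, hp'p, hcard⟩ := FiniteField.card L p'
  have hpdvd : p ∣ p' ^ (k : ℕ) := by
    rw [← hcard, hcardL, ← hqe, ← pow_mul]
    exact dvd_pow_self p (by positivity)
  have hpp'eq : p = p' := ((Nat.prime_dvd_prime_iff_eq hpp' hp'p).mp
    (hpp'.dvd_of_dvd_pow hpdvd))
  subst hpp'eq
  -- linearization
  have hpow : ∀ f : L[X], IsqLinearized q f → IsqLinearized q (f ^ q) := fun f hf =>
    isqLinearized_pow p e q hqe.symm he f hf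
  have hP'lin : IsqLinearized q P' := by
    rw [hP', show P ^ q - C (Γ ^ (q - 1)) * P = C 1 * P ^ q - C (Γ ^ (q - 1)) * P by simp]
    exact isqLinearized_comb q _ _ _ _ (hpow P hP) hP
  have hK'lin : IsqLinearized q K' := by
    rw [hK', show Kp ^ q - C (Γ ^ (q - 1)) * Kp = C 1 * Kp ^ q - C (Γ ^ (q - 1)) * Kp by simp]
    exact isqLinearized_comb q _ _ _ _ (hpow Kp hKp) hKp
  have hN'lin : IsqLinearized q N' := hN' ▸ isqLinearized_comb q _ _ _ _ hP hN
  have hD'lin : IsqLinearized q D' := hD' ▸ isqLinearized_comb q _ _ _ _ hKp hD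
  refine ⟨⟨hP'lin, hK'lin, hN'lin, hD'lin⟩, ?_⟩
  have hsub : ∀ x y : L, (x - y) ^ q = x ^ q - y ^ q := by
    intro x y; rw [hqe.symm]; exact sub_pow_char_pow x y e
  intro j
  refine Fin.lastCases ?_ (fun i => ?_) j
  · -- last point
    constructor
    · rw [hP', hK']
      simp only [eval_sub, eval_mul, eval_pow, eval_C]
      have key : P.eval (g (Fin.last n)) ^ q - Kp.eval (r (Fin.last n)) ^ q = Γ ^ q := by
        rw [← hsub, ← hΓ]
      have key2 : Γ ^ (q - 1) * P.eval (g (Fin.last n)) -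
          Γ ^ (q - 1) * Kp.eval (r (Fin.last n)) = Γ ^ q := by
        rw [← mul_sub, ← hΓ, ← pow_succ, Nat.sub_add_cancel hq1]
      linear_combination key - key2
    · rw [hN', hD']
      simp only [eval_sub, eval_mul, eval_C]
      have h1 : P.eval (g (Fin.last n)) - Kp.eval (r (Fin.last n)) = Γ := hΓ.symm
      have h2 : N.eval (g (Fin.last n)) - D.eval (r (Fin.last n)) = Δ := hΔ.symm
      linear_combination Δ * h1 - Γ * h2
  · -- earlier points
    constructor
    · rw [hP', hK']
      simp only [eval_sub, eval_mul, eval_pow, eval_C]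
      rw [hPK i]
    · rw [hN', hD']
      simp only [eval_sub, eval_mul, eval_C]
      rw [hPK i, hND i]
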